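/- Let N > 1 be an odd integer and r an integer coprime to N. The number of matrices g ∈ GL₂(ℤ/Nℤ) with det(g) = r and g² = −r·I equals N² · ∏_{p | N} (1 + (1/p)·χ(p)), where χ(p) = 1 if −r is a square mod p and χ(p) = −1 otherwise. Equivalently, it equals the number of pairs (a,b,c) with a² + bc = −r, counted as matrices of the form ((a, b),(c, −a)). -/

import Mathlib

open scoped Classical

section AuxStmt3
-- reduction mod p of a nonunit in ZMod p^k is zero
lemma red_zero_of_not_isUnit {p k : ℕ} (hp : p.Prime) (hk : k ≠ 0) (c : ZMod (p^k))
    (hc : ¬ IsUnit c) : ZMod.castHom (dvd_pow_self p hk) (ZMod p) c = 0 := by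
  haveI : NeZero (p^k) := ⟨pow_ne_zero k hp.ne_zero⟩
  by_contra h
  apply hc
  have hval : ((c.val : ZMod p)) ≠ 0 := by
    rwa [ZMod.castHom_apply, ← ZMod.natCast_val] at h
  have hdvd : ¬ p ∣ c.val := fun hd =>
    hval ((ZMod.natCast_eq_zero_iff _ _).mpr hd)
  have hcop : Nat.Coprime c.val (p^k) :=
    ((Nat.Prime.coprime_iff_not_dvd hp).mpr hdvd).symm.pow_right k
  have := (ZMod.isUnit_iff_coprime c.val (p^k)).mpr hcop
  rwa [ZMod.natCast_val, ZMod.cast_id] at this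

lemma isUnit_sub_cases {p k : ℕ} (hp : p.Prime) (hk : k ≠ 0) (x y : ZMod (p^k))
    (hxy : IsUnit (x - y)) (h : x * y = 0) : x = 0 ∨ y = 0 := by
  haveI : Fact p.Prime := ⟨hp⟩
  by_cases hx : IsUnit x
  · right
    calc y = x⁻¹ * (x * y) := by
            rw [← mul_assoc, ZMod.inv_mul_of_unit x hx, one_mul]
      _ = 0 := by rw [h, mul_zero]
  · by_cases hy : IsUnit y
    · left
      calc x = (x * y) * y⁻¹ := by
            rw [mul_assoc, ZMod.mul_inv_of_unit y hy, mul_one]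
        _ = 0 := by rw [h, zero_mul]
    · exfalso
      have h1 := red_zero_of_not_isUnit hp hk x hx
      have h2 := red_zero_of_not_isUnit hp hk y hy
      have h0 : ZMod.castHom (dvd_pow_self p hk) (ZMod p) (x - y) = 0 := by
        rw [map_sub, h1, h2, sub_zero]
      have hu := hxy.map (ZMod.castHom (dvd_pow_self p hk) (ZMod p))
      rw [h0] at hu
      exact (not_isUnit_zero (M₀ := ZMod p)) hu

lemma isSquare_lift {p : ℕ} (hp : p.Prime) (hp2 : p ≠ 2) :
    ∀ (k : ℕ) (hk : k ≠ 0) (w : ZMod (p^k)), IsUnit w →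
    IsSquare (ZMod.castHom (dvd_pow_self p hk) (ZMod p) w) → IsSquare w := by
  haveI : Fact p.Prime := ⟨hp⟩
  intro k
  induction k with
  | zero => intro hk; exact absurd rfl hk
  | succ k ih =>
    intro hk w hw hsq
    haveI : NeZero (p^(k+1)) := ⟨pow_ne_zero _ hp.ne_zero⟩
    haveI : NeZero (p^k) := ⟨pow_ne_zero _ hp.ne_zero⟩
    by_cases hk0 : k = 0
    · subst hk0
      -- base case: ZMod (p^1) ≅ ZMod p
      set f := ZMod.castHom (dvd_pow_self p hk) (ZMod p)
      have hsurj : Function.Surjective f := by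
        intro y
        refine ⟨((y.val : ℕ) : ZMod (p^1)), ?_⟩
        rw [map_natCast, ZMod.natCast_val, ZMod.cast_id]
      have hbij : Function.Bijective f :=
        (Fintype.bijective_iff_surjective_and_card f).mpr
          ⟨hsurj, by simp [ZMod.card]⟩
      obtain ⟨x, hx⟩ := hsq
      obtain ⟨y, rfl⟩ := hsurj x
      exact ⟨y, hbij.injective (by rw [hx, map_mul])⟩
    · -- inductive step
      set π := ZMod.castHom (pow_dvd_pow p (Nat.le_succ k)) (ZMod (p^k)) with hπ
      have hcomp : ∀ z : ZMod (p^(k+1)),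
          ZMod.castHom (dvd_pow_self p hk0) (ZMod p) (π z)
            = ZMod.castHom (dvd_pow_self p hk) (ZMod p) z := by
        intro z
        have := ZMod.castHom_comp (n := p) (m := p^k) (d := p^(k+1))
          (dvd_pow_self p hk0) (pow_dvd_pow p (Nat.le_succ k))
        calc ZMod.castHom (dvd_pow_self p hk0) (ZMod p) (π z)
            = ((ZMod.castHom (dvd_pow_self p hk0) (ZMod p)).comp π) z := rfl
          _ = ZMod.castHom (dvd_pow_self p hk) (ZMod p) z := by rw [this]
      have hπw : IsSquare (π w) := by
        apply ih hk0 (π w) (hw.map π)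
        rw [hcomp]; exact hsq
      obtain ⟨a', ha'⟩ := hπw
      set a : ZMod (p^(k+1)) := (a'.val : ZMod (p^(k+1))) with ha
      have hπa : π a = a' := by
        rw [ha, map_natCast, ZMod.natCast_val, ZMod.cast_id]
      -- w - a*a is divisible by p^k
      have hker : π (w - a*a) = 0 := by
        rw [map_sub, map_mul, hπa, ha', sub_self]
      have hval : (p^k : ℕ) ∣ (w - a*a).val := by
        rw [ZMod.castHom_apply, ← ZMod.natCast_val] at hker
        exact (ZMod.natCast_eq_zero_iff _ _).mp hker
      obtain ⟨m, hm⟩ := hval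
      set q : ZMod (p^(k+1)) := ((p^k : ℕ) : ZMod (p^(k+1))) with hq
      have hwa : w - a*a = q * (m : ZMod (p^(k+1))) := by
        have : (((w - a*a).val : ℕ) : ZMod (p^(k+1))) = w - a*a := by
          rw [ZMod.natCast_val, ZMod.cast_id]
        rw [← this, hm, hq]; push_cast; ring
      -- a is a unit
      have hau : IsUnit a := by
        by_contra hna
        have h0 := red_zero_of_not_isUnit hp hk a hna
        have hq0 : ZMod.castHom (dvd_pow_self p hk) (ZMod p) q = 0 := by
          rw [hq, map_natCast, ZMod.natCast_eq_zero_iff]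
          exact dvd_pow_self p hk0
        have : ZMod.castHom (dvd_pow_self p hk) (ZMod p) w = 0 := by
          have : w = a*a + q * (m : ZMod (p^(k+1))) := by rw [← hwa]; ring
          rw [this, map_add, map_mul, map_mul, h0, hq0, zero_mul, zero_mul, add_zero]
        have hu := hw.map (ZMod.castHom (dvd_pow_self p hk) (ZMod p))
        rw [this] at hu
        exact not_isUnit_zero (M₀ := ZMod p) hu
      -- 2 is a unit
      have h2u : IsUnit (2 : ZMod (p^(k+1))) := by
        have : IsUnit ((2 : ℕ) : ZMod (p^(k+1))) := by
          rw [ZMod.isUnit_iff_coprime]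
          exact Nat.Coprime.pow_right _
            ((Nat.coprime_primes Nat.prime_two hp).mpr (Ne.symm hp2))
        simpa using this
      have h2au : IsUnit (2 * a) := h2u.mul hau
      set s : ZMod (p^(k+1)) := (2*a)⁻¹ * (m : ZMod (p^(k+1))) with hs
      have hq2 : q * q = 0 := by
        rw [hq, ← Nat.cast_mul, ZMod.natCast_eq_zero_iff, ← pow_add]
        exact pow_dvd_pow p (by omega)
      refine ⟨a + q * s, ?_⟩
      have h2as : 2 * a * s = (m : ZMod (p^(k+1))) := by
        rw [hs, ← mul_assoc, ZMod.mul_inv_of_unit _ h2au, one_mul]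
      have expand : (a + q*s) * (a + q*s) = a*a + q*(2*a*s) + (q*q)*(s*s) := by ring
      rw [eq_comm, expand, hq2, zero_mul, add_zero, h2as, ← hwa]
      ring

lemma isUnit_two_zmod {p k : ℕ} (hp : p.Prime) (hp2 : p ≠ 2) :
    IsUnit (2 : ZMod (p^k)) := by
  have : IsUnit ((2 : ℕ) : ZMod (p^k)) := by
    rw [ZMod.isUnit_iff_coprime]
    exact Nat.Coprime.pow_right _
      ((Nat.coprime_primes Nat.prime_two hp).mpr (Ne.symm hp2))
  simpa using this

lemma card_sqrt {p k : ℕ} (hp : p.Prime) (hp2 : p ≠ 2) (hk : k ≠ 0) (w : ZMod (p^k))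
    (hw : IsUnit w)
    (hsq : IsSquare (ZMod.castHom (dvd_pow_self p hk) (ZMod p) w)) :
    Nat.card {a : ZMod (p^k) // a^2 = w} = 2 := by
  obtain ⟨a₀, ha₀⟩ := isSquare_lift hp hp2 k hk w hw hsq
  have ha₀u : IsUnit a₀ := by
    by_contra h
    have h0 := red_zero_of_not_isUnit hp hk a₀ h
    have : ZMod.castHom (dvd_pow_self p hk) (ZMod p) w = 0 := by
      rw [ha₀, map_mul, h0, mul_zero]
    have hu := hw.map (ZMod.castHom (dvd_pow_self p hk) (ZMod p))
    rw [this] at hu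
    haveI : Fact p.Prime := ⟨hp⟩
    exact not_isUnit_zero (M₀ := ZMod p) hu
  have h2a : IsUnit (2 * a₀) := (isUnit_two_zmod hp hp2).mul ha₀u
  have hne : a₀ ≠ -a₀ := by
    intro h
    have h20 : 2 * a₀ = 0 := by
      rw [two_mul]; nth_rewrite 2 [h]; ring
    rw [h20] at h2a
    haveI : Fact (1 < p^k) := ⟨Nat.one_lt_pow hk hp.one_lt⟩
    exact not_isUnit_zero h2a
  have hset : {a : ZMod (p^k) | a^2 = w} = {a₀, -a₀} := by
    ext a
    simp only [Set.mem_setOf_eq, Set.mem_insert_iff, Set.mem_singleton_iff]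
    constructor
    · intro h
      have hmul : (a - a₀) * (a + a₀) = 0 := by
        have : a^2 - a₀^2 = 0 := by rw [h, ha₀]; ring
        calc (a - a₀) * (a + a₀) = a^2 - a₀^2 := by ring
          _ = 0 := this
      have hsub : IsUnit ((a - a₀) - (a + a₀)) := by
        have : (a - a₀) - (a + a₀) = -(2 * a₀) := by ring
        rw [this]
        exact h2a.neg
      rcases isUnit_sub_cases hp hk _ _ hsub hmul with h1 | h1
      · left; linear_combination h1
      · right; linear_combination h1
    · rintro (rfl | rfl)
      · rw [ha₀]; ring
      · rw [ha₀]; ring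
  calc Nat.card {a : ZMod (p^k) // a^2 = w}
      = Set.ncard {a : ZMod (p^k) | a^2 = w} := (Nat.card_coe_set_eq _)
    _ = 2 := by rw [hset]; exact Set.ncard_pair hne

noncomputable def unitsEquivIsUnit' (M : Type*) [Monoid M] : Mˣ ≃ {x : M // IsUnit x} where
  toFun u := ⟨u, u.isUnit⟩
  invFun x := x.2.unit
  left_inv u := Units.ext (IsUnit.unit_spec u.isUnit)
  right_inv x := Subtype.ext x.2.unit_spec

lemma count_pp {p k : ℕ} (hp : p.Prime) (hp2 : p ≠ 2) (hk : k ≠ 0) (r : ℤ)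
    (hr : IsUnit ((r : ZMod (p^k)))) :
    Nat.card {v : ZMod (p^k) × ZMod (p^k) × ZMod (p^k) //
        v.1^2 + v.2.1*v.2.2 = -(r : ZMod (p^k))}
      = if IsSquare (-(r : ZMod p)) then p^(2*k-1)*(p+1) else p^(2*k-1)*(p-1) := by
  haveI : Fact p.Prime := ⟨hp⟩
  haveI : NeZero (p^k) := ⟨pow_ne_zero _ hp.ne_zero⟩
  set n := p^k with hn
  set u : ZMod n := -(r : ZMod n) with hu_def
  have hu : IsUnit u := hr.neg
  set ρ := ZMod.castHom (dvd_pow_self p hk) (ZMod p) with hρ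
  have hρu : ρ u = -(r : ZMod p) := by rw [hu_def, map_neg, map_intCast]
  have hρu_unit : IsUnit (ρ u) := hu.map ρ
  set P : ZMod n × ZMod n × ZMod n → Prop := fun v => v.1^2 + v.2.1*v.2.2 = u with hP
  set Q : ZMod n × ZMod n × ZMod n → Prop := fun v => IsUnit v.2.2 with hQ
  -- split
  have hsplit : Nat.card {v // P v}
      = Nat.card {v // P v ∧ Q v} + Nat.card {v // P v ∧ ¬ Q v} := by
    have E : {v // P v ∧ Q v} ⊕ {v // P v ∧ ¬ Q v} ≃ {v // P v} :=
      (Equiv.sumCongr (Equiv.subtypeSubtypeEquivSubtypeInter P Q).symm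
        (Equiv.subtypeSubtypeEquivSubtypeInter P (fun v => ¬ Q v)).symm).trans
        (Equiv.sumCompl (fun x : {v // P v} => Q x.1))
    rw [← Nat.card_congr E, Nat.card_sum]
  -- first piece
  have E₁ : {v // P v ∧ Q v} ≃ ZMod n × (ZMod n)ˣ := by
    refine ⟨fun x => (x.1.1, x.2.2.unit), fun y => ⟨(y.1, (u - y.1^2) * ↑y.2⁻¹, ↑y.2), ?_, ?_⟩,
      ?_, ?_⟩
    · show y.1^2 + ((u - y.1^2) * ↑y.2⁻¹) * ↑y.2 = u
      rw [mul_assoc, Units.inv_mul, mul_one]; ring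
    · exact y.2.isUnit
    · rintro ⟨⟨a, b, c⟩, hPv, hQv⟩
      apply Subtype.ext
      have hc : (hQv.unit : ZMod n) = c := hQv.unit_spec
      have hb : (u - a^2) * ↑hQv.unit⁻¹ = b := by
        have hPv' : a^2 + b * c = u := hPv
        have h1 : u - a^2 = b * c := by linear_combination -hPv'
        calc (u - a^2) * ↑hQv.unit⁻¹
            = b * (↑hQv.unit * ↑hQv.unit⁻¹) := by rw [hc, ← mul_assoc, ← h1]
          _ = b := by rw [Units.mul_inv, mul_one]
      simp only
      exact Prod.ext rfl (Prod.ext hb hc)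
    · rintro ⟨a, c⟩
      simp only
      refine Prod.ext rfl (Units.ext ?_)
      exact IsUnit.unit_spec _
  have hcard1 : Nat.card {v // P v ∧ Q v} = p^k * (p^k).totient := by
    rw [Nat.card_congr E₁, Nat.card_prod, Nat.card_eq_fintype_card, Nat.card_eq_fintype_card,
      ZMod.card, ZMod.card_units_eq_totient]
  by_cases hχ : IsSquare (-(r : ZMod p))
  · -- residue case
    have E₂ : {v // P v ∧ ¬ Q v} ≃
        Σ t : ZMod n × {c : ZMod n // ¬ IsUnit c}, {a : ZMod n // a^2 = u - t.1 * t.2.1} := by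
      refine ⟨fun x => ⟨(x.1.2.1, ⟨x.1.2.2, x.2.2⟩), ⟨x.1.1, ?_⟩⟩,
        fun y => ⟨(y.2.1, y.1.1, y.1.2.1), ?_, ?_⟩, ?_, ?_⟩
      · have hPv : x.1.1^2 + x.1.2.1 * x.1.2.2 = u := x.2.1
        linear_combination hPv
      · show y.2.1^2 + y.1.1 * y.1.2.1 = u
        have h2 : y.2.1^2 = u - y.1.1 * y.1.2.1 := y.2.2
        linear_combination h2
      · exact y.1.2.2
      · rintro ⟨⟨a, b, c⟩, h1, h2⟩; rfl
      · rintro ⟨⟨b, c, hc⟩, a, ha⟩; rfl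
    have hfib : ∀ t : ZMod n × {c : ZMod n // ¬ IsUnit c},
        Nat.card {a : ZMod n // a^2 = u - t.1 * t.2.1} = 2 := by
      rintro ⟨b, c, hc⟩
      have hρc : ρ c = 0 := red_zero_of_not_isUnit hp hk c hc
      have hρw : ρ (u - b * c) = -(r : ZMod p) := by
        rw [map_sub, map_mul, hρc, mul_zero, sub_zero, hρu]
      have hwu : IsUnit (u - b * c) := by
        by_contra hnw
        have h0 := red_zero_of_not_isUnit hp hk _ hnw
        rw [hρw] at h0
        have := hρu_unit
        rw [hρu, h0] at this
        exact not_isUnit_zero (M₀ := ZMod p) this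
      exact card_sqrt hp hp2 hk _ hwu (by rw [hρw]; exact hχ)
    have hcard2 : Nat.card {v // P v ∧ ¬ Q v}
        = (p^k * (p^k - (p^k).totient)) * 2 := by
      rw [Nat.card_congr E₂, Nat.card_eq_fintype_card, Fintype.card_sigma]
      have hfib' : ∀ t : ZMod n × {c : ZMod n // ¬ IsUnit c},
          Fintype.card {a : ZMod n // a^2 = u - t.1 * (t.2 : ZMod n)} = 2 := fun t => by
        rw [← Nat.card_eq_fintype_card]; exact hfib t
      rw [Finset.sum_congr rfl (fun t _ => hfib' t), Finset.sum_const, Finset.card_univ,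
        smul_eq_mul, Fintype.card_prod, ZMod.card, Fintype.card_subtype_compl,
        ← Fintype.card_congr (unitsEquivIsUnit' (ZMod n)), ZMod.card_units_eq_totient,
        ZMod.card]
    rw [if_pos hχ, hsplit, hcard1, hcard2]
    obtain ⟨j, rfl⟩ : ∃ j, k = j + 1 := ⟨k - 1, by omega⟩
    obtain ⟨q, rfl⟩ : ∃ q, p = q + 1 := ⟨p - 1, by have := hp.pos; omega⟩
    rw [Nat.totient_prime_pow hp (Nat.succ_pos j)]
    simp only [Nat.add_sub_cancel, Nat.succ_sub_one]
    have he : 2*(j+1)-1 = 2*j+1 := by omega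
    rw [he]
    have hsub : (q+1)^(j+1) - (q+1)^j * q = (q+1)^j := by
      have : (q+1)^(j+1) = (q+1)^j * q + (q+1)^j := by ring
      omega
    rw [hsub]
    ring
  · -- nonresidue case
    have hempty : IsEmpty {v // P v ∧ ¬ Q v} := by
      refine ⟨fun x => hχ ?_⟩
      obtain ⟨⟨a, b, c⟩, hPv, hQv⟩ := x
      have hρc : ρ c = 0 := red_zero_of_not_isUnit hp hk c hQv
      have hPv' : a^2 + b * c = u := hPv
      have : (ρ a)^2 = -(r : ZMod p) := by
        have := congrArg ρ hPv'
        rw [map_add, map_pow, map_mul, hρc, mul_zero, add_zero, hρu] at this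
        exact this
      exact ⟨ρ a, by rw [← this]; ring⟩
    have hcard2 : Nat.card {v // P v ∧ ¬ Q v} = 0 := Nat.card_of_isEmpty
    rw [if_neg hχ, hsplit, hcard1, hcard2, Nat.add_zero]
    obtain ⟨j, rfl⟩ : ∃ j, k = j + 1 := ⟨k - 1, by omega⟩
    obtain ⟨q, rfl⟩ : ∃ q, p = q + 1 := ⟨p - 1, by have := hp.pos; omega⟩
    rw [Nat.totient_prime_pow hp (Nat.succ_pos j)]
    simp only [Nat.add_sub_cancel, Nat.succ_sub_one]
    have he : 2*(j+1)-1 = 2*j+1 := by omega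
    rw [he]
    ring

noncomputable def Fcount (r : ℤ) (n : ℕ) : ℕ :=
  Nat.card {v : ZMod n × ZMod n × ZMod n // v.1^2 + v.2.1*v.2.2 = -(r : ZMod n)}

lemma Fcount_one (r : ℤ) : Fcount r 1 = 1 := by
  have hall : ∀ v : ZMod 1 × ZMod 1 × ZMod 1,
      v.1^2 + v.2.1*v.2.2 = -(r : ZMod 1) := fun v => Subsingleton.elim _ _
  haveI : Unique {v : ZMod 1 × ZMod 1 × ZMod 1 // v.1^2 + v.2.1*v.2.2 = -(r : ZMod 1)} :=
    ⟨⟨⟨(0,0,0), hall _⟩⟩, fun a => Subtype.ext (Subsingleton.elim _ _)⟩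
  exact Nat.card_unique

lemma Fcount_mul (r : ℤ) (m n : ℕ) (h : Nat.Coprime m n) :
    Fcount r (m * n) = Fcount r m * Fcount r n := by
  set e := ZMod.chineseRemainder h with he
  refine Eq.trans (Nat.card_congr ?_) (Nat.card_prod _ _)
  refine ⟨fun x => (⟨((e x.1.1).1, (e x.1.2.1).1, (e x.1.2.2).1), ?_⟩,
                    ⟨((e x.1.1).2, (e x.1.2.1).2, (e x.1.2.2).2), ?_⟩),
          fun y => ⟨(e.symm (y.1.1.1, y.2.1.1), e.symm (y.1.1.2.1, y.2.1.2.1),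
                     e.symm (y.1.1.2.2, y.2.1.2.2)), ?_⟩, ?_, ?_⟩
  · have hx := congrArg e x.2
    rw [map_add, map_pow, map_mul, map_neg, map_intCast] at hx
    have := congrArg Prod.fst hx
    simpa using this
  · have hx := congrArg e x.2
    rw [map_add, map_pow, map_mul, map_neg, map_intCast] at hx
    have := congrArg Prod.snd hx
    simpa using this
  · apply e.injective
    rw [map_add, map_pow, map_mul, map_neg, map_intCast]
    rw [RingEquiv.apply_symm_apply, RingEquiv.apply_symm_apply, RingEquiv.apply_symm_apply]
    have h1 := y.1.2
    have h2 := y.2.2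
    apply Prod.ext
    · simpa using h1
    · simpa using h2
  · intro x
    apply Subtype.ext
    simp only
    refine Prod.ext ?_ (Prod.ext ?_ ?_) <;> simp
  · intro y
    apply Prod.ext <;> (apply Subtype.ext; simp only) <;>
      refine Prod.ext ?_ (Prod.ext ?_ ?_) <;> simp

lemma isUnit_intCast_of_coprime {r : ℤ} {N m : ℕ} (hm : m ∣ N) (hr : Int.gcd r N = 1) :
    IsUnit ((r : ZMod m)) := by
  have hrn : Nat.gcd r.natAbs N = 1 := by rwa [Int.gcd, Int.natAbs_natCast] at hr
  have h2 : Nat.Coprime r.natAbs m :=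
    Nat.eq_one_of_dvd_one (hrn ▸ Nat.gcd_dvd_gcd_of_dvd_right _ hm)
  have h3 : IsUnit ((r.natAbs : ℕ) : ZMod m) := (ZMod.isUnit_iff_coprime _ _).mpr h2
  rcases Int.natAbs_eq r with h | h
  · rw [h, Int.cast_natCast]; exact h3
  · rw [h, Int.cast_neg, Int.cast_natCast]; exact h3.neg

lemma matrix_equiv_triples (N : ℕ) (r : ℤ) (hru : IsUnit ((r : ZMod N))) :
    Nat.card {g : Matrix (Fin 2) (Fin 2) (ZMod N) //
        g.det = (r : ZMod N) ∧
        g * g = -((r : ZMod N) • (1 : Matrix (Fin 2) (Fin 2) (ZMod N)))}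
      = Nat.card {v : ZMod N × ZMod N × ZMod N //
          v.1 ^ 2 + v.2.1 * v.2.2 = -(r : ZMod N)} := by
  apply Nat.card_congr
  refine ⟨fun g => ⟨(g.1 0 0, g.1 0 1, g.1 1 0), ?_⟩,
          fun v => ⟨!![v.1.1, v.1.2.1; v.1.2.2, -v.1.1], ?_, ?_⟩, ?_, ?_⟩
  · -- a^2 + b*c = -r from (g*g) 0 0
    obtain ⟨g, hdet, hsq⟩ := g
    have h00 := congrFun (congrFun hsq 0) 0
    rw [Matrix.mul_apply, Fin.sum_univ_two] at h00
    simp only [Matrix.neg_apply, Matrix.smul_apply, Matrix.one_apply_eq, smul_eq_mul,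
      mul_one] at h00
    simp only
    rw [pow_two]
    exact h00
  · -- det
    obtain ⟨⟨a, b, c⟩, hv⟩ := v
    simp only [Matrix.det_fin_two_of]
    have hv' : a^2 + b*c = -(r : ZMod N) := hv
    linear_combination -hv'
  · -- square
    obtain ⟨⟨a, b, c⟩, hv⟩ := v
    have hv' : a^2 + b*c = -(r : ZMod N) := hv
    apply Matrix.ext
    intro i j
    rw [Matrix.mul_apply, Fin.sum_univ_two]
    fin_cases i <;> fin_cases j <;>
      simp [Matrix.one_apply, Fin.ext_iff] <;>
      first
        | ring1
        | linear_combination hv'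
        | linear_combination -hv'
  · -- left inverse
    rintro ⟨g, hdet, hsq⟩
    apply Subtype.ext
    simp only
    have h00 := congrFun (congrFun hsq 0) 0
    have h01 := congrFun (congrFun hsq 0) 1
    have h10 := congrFun (congrFun hsq 1) 0
    have h11 := congrFun (congrFun hsq 1) 1
    rw [Matrix.mul_apply, Fin.sum_univ_two] at h00 h01 h10 h11
    simp only [Matrix.neg_apply, Matrix.smul_apply, Matrix.one_apply, smul_eq_mul,
      Fin.ext_iff] at h00 h01 h10 h11
    norm_num at h00 h01 h10 h11
    rw [Matrix.det_fin_two] at hdet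
    set a := g 0 0; set b := g 0 1; set c := g 1 0; set d := g 1 1
    have ht : (a + d) * (r : ZMod N) = 0 := by
      linear_combination d*h00 - c*h01 - a*hdet
    have htz : a + d = 0 := by
      obtain ⟨u, hu⟩ := hru
      have := congrArg (· * (↑u⁻¹ : ZMod N)) ht
      simp only [zero_mul] at this
      rwa [mul_assoc, ← hu, Units.mul_inv, mul_one] at this
    have hd : d = -a := by linear_combination htz
    apply Matrix.ext
    intro i j
    fin_cases i <;> fin_cases j <;> simp <;> first | ring1 | linear_combination -htz
  · -- right inverse
    rintro ⟨⟨a, b, c⟩, hv⟩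
    apply Subtype.ext
    simp

end AuxStmt3


/-- Let `N > 1` be an odd integer and `r` an integer coprime to `N`.  The number of
matrices `g ∈ GL₂(ℤ/Nℤ)` with `det g = r` and `g² = −r·I` equals
`N² · ∏_{p | N} (1 + χ(p)/p)` where `χ(p) = 1` if `−r` is a square mod `p` and `−1`
otherwise; equivalently it equals the number of triples `(a,b,c)` with `a² + bc = −r`
(counted as the matrices `((a,b),(c,−a))`). -/
theorem stmt_3 (N : ℕ) (hN : 1 < N) (hNodd : Odd N) (r : ℤ) (hr : Int.gcd r N = 1) :
    ((Nat.card {g : Matrix (Fin 2) (Fin 2) (ZMod N) //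
        g.det = (r : ZMod N) ∧
        g * g = -((r : ZMod N) • (1 : Matrix (Fin 2) (Fin 2) (ZMod N)))} : ℚ)
      = (N : ℚ) ^ 2 * ∏ p ∈ N.primeFactors,
          (1 + (if IsSquare (-(r : ZMod p)) then (1 : ℚ) else -1) / (p : ℚ)))
    ∧ Nat.card {g : Matrix (Fin 2) (Fin 2) (ZMod N) //
        g.det = (r : ZMod N) ∧
        g * g = -((r : ZMod N) • (1 : Matrix (Fin 2) (Fin 2) (ZMod N)))}
      = Nat.card {v : ZMod N × ZMod N × ZMod N //
          v.1 ^ 2 + v.2.1 * v.2.2 = -(r : ZMod N)} := by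
  have hN0 : N ≠ 0 := by omega
  have hru : IsUnit ((r : ZMod N)) := isUnit_intCast_of_coprime dvd_rfl hr
  have part2 := matrix_equiv_triples N r hru
  refine ⟨?_, part2⟩
  -- facts about the primes dividing N
  have hfacts : ∀ p ∈ N.primeFactors, p.Prime ∧ p ≠ 2 ∧ N.factorization p ≠ 0 ∧
      IsUnit ((r : ZMod (p ^ N.factorization p))) := by
    intro p hp_mem
    have hp : p.Prime := Nat.prime_of_mem_primeFactors hp_mem
    have hpdvd : p ∣ N := Nat.dvd_of_mem_primeFactors hp_mem
    have hp2 : p ≠ 2 := by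
      rintro rfl
      exact (Nat.not_even_iff_odd.mpr hNodd) ((even_iff_two_dvd).mpr hpdvd)
    have hk : N.factorization p ≠ 0 := Finsupp.mem_support_iff.mp hp_mem
    exact ⟨hp, hp2, hk, isUnit_intCast_of_coprime (Nat.ordProj_dvd N p) hr⟩
  -- count of triples via multiplicativity
  have hFN : Fcount r N = ∏ p ∈ N.primeFactors,
      (if IsSquare (-(r : ZMod p)) then p^(2*(N.factorization p)-1)*(p+1)
       else p^(2*(N.factorization p)-1)*(p-1)) := by
    rw [Nat.multiplicative_factorization (Fcount r)
      (fun x y h => Fcount_mul r x y h) (Fcount_one r) hN0]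
    rw [Finsupp.prod]
    refine Finset.prod_congr rfl ?_
    intro p hp_mem
    obtain ⟨hp, hp2, hk, hrp⟩ := hfacts p hp_mem
    exact count_pp hp hp2 hk r hrp
  -- the matrix count equals Fcount r N
  have hmc : Nat.card {g : Matrix (Fin 2) (Fin 2) (ZMod N) //
        g.det = (r : ZMod N) ∧
        g * g = -((r : ZMod N) • (1 : Matrix (Fin 2) (Fin 2) (ZMod N)))} = Fcount r N :=
    part2
  rw [hmc, hFN]
  -- N as a product over prime factors
  have hNprod : (N : ℚ) = ∏ p ∈ N.primeFactors, (p : ℚ) ^ (N.factorization p) := by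
    conv_lhs => rw [← Nat.factorization_prod_pow_eq_self hN0]
    rw [Finsupp.prod]
    push_cast
    rfl
  rw [Nat.cast_prod, hNprod, ← Finset.prod_pow, ← Finset.prod_mul_distrib]
  refine Finset.prod_congr rfl ?_
  intro p hp_mem
  obtain ⟨hp, hp2, hk, -⟩ := hfacts p hp_mem
  have hp0 : (p : ℚ) ≠ 0 := Nat.cast_ne_zero.mpr hp.ne_zero
  have h2k : 2*(N.factorization p) = (2*(N.factorization p)-1)+1 := by omega
  have hpow : ((p:ℚ) ^ (N.factorization p)) ^ 2 = (p:ℚ) ^ (2*(N.factorization p)) := by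
    rw [← pow_mul, Nat.mul_comm]
  by_cases hχ : IsSquare (-(r : ZMod p))
  · rw [if_pos hχ, if_pos hχ, hpow, h2k, pow_succ]
    push_cast
    field_simp
  · rw [if_neg hχ, if_neg hχ, hpow, h2k, pow_succ]
    rw [Nat.cast_mul, Nat.cast_sub hp.one_lt.le]
    push_cast
    field_simp
    ring
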